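/- For words over a binary alphabet {a,b}: a word w is k-universal if and only if w contains k disjoint consecutive factors each belonging to {ab, ba}; i.e., w admits a factorization w = s_0 d_1 s_1 d_2 ... d_k s_k where each d_i ∈ {ab, ba}. -/

import Mathlib

private lemma bool_cases {a b c : Bool} (hab : a ≠ b) : c = a ∨ c = b := by
  revert hab; revert a b c; decide

private lemma first_occ {α : Type*} [DecidableEq α] :
    ∀ (w : List α) (y : α), y ∈ w → ∃ s t, w = s ++ y :: t ∧ y ∉ s := by
  intro w y hw
  induction w with
  | nil => simp at hw
  | cons c w ih =>
    by_cases hc : c = y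
    · exact ⟨[], w, by simp [hc], by simp⟩
    · have hyw : y ∈ w := by
        rcases List.mem_cons.mp hw with h | h
        · exact absurd h.symm hc
        · exact h
      obtain ⟨s, t, h1, h2⟩ := ih hyw
      refine ⟨c :: s, t, by simp [h1], ?_⟩
      simp only [List.mem_cons, not_or]
      exact ⟨fun h => hc h.symm, h2⟩

private lemma skip_prefix {α : Type*} : ∀ (L : List α) {t u : List α} {y : α},
    y ∉ L → (y :: u).Sublist (L ++ y :: t) → u.Sublist t := by
  intro L
  induction L with
  | nil =>
    intro t u y _ h
    exact List.cons_sublist_cons.mp h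
  | cons z L ih =>
    intro t u y hy h
    cases h with
    | cons _ h' => exact ih (fun hm => hy (List.mem_cons_of_mem _ hm)) h'
    | cons_cons _ h' => exact absurd List.mem_cons_self hy

private lemma mem_sublist_join {a b : Bool} (hab : a ≠ b) :
    ∀ (l : List (List Bool × List Bool)),
      (∀ p ∈ l, p.1 = [a, b] ∨ p.1 = [b, a]) →
      ∀ u : List Bool, u.length = l.length →
        u.Sublist (l.map fun p => p.1 ++ p.2).flatten := by
  intro l
  induction l with
  | nil => intro _ u hu; simp [List.length_eq_zero_iff.mp hu]
  | cons p l ih =>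
    intro hl u hu
    match u, hu with
    | c :: u, hu =>
      have hu' : u.length = l.length := by simpa using hu
      have h1 : [c].Sublist p.1 := by
        rcases hl p List.mem_cons_self with h | h <;>
        · rw [h]; rcases bool_cases (c := c) hab with rfl | rfl <;> simp
      have h2 : u.Sublist (p.2 ++ (l.map fun p => p.1 ++ p.2).flatten) :=
        (ih (fun q hq => hl q (List.mem_cons_of_mem _ hq)) u hu').trans
          (List.sublist_append_right _ _)
      simpa [List.append_assoc] using h1.append h2

/-- Over the binary alphabet, w is k-universal iff w factors as
s₀ d₁ s₁ d₂ ⋯ d_k s_k with each d_i ∈ {ab, ba}. -/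
theorem binary_universal_iff {a b : Bool} (hab : a ≠ b) (w : List Bool) (k : ℕ) :
    (∀ u : List Bool, u.length = k → u.Sublist w) ↔
      ∃ (s₀ : List Bool) (l : List (List Bool × List Bool)),
        l.length = k ∧
        (∀ p ∈ l, p.1 = [a, b] ∨ p.1 = [b, a]) ∧
        w = s₀ ++ (l.map fun p => p.1 ++ p.2).flatten := by
  constructor
  · intro h
    induction k generalizing w with
    | zero => exact ⟨w, [], rfl, by simp, by simp⟩
    | succ k ih =>
      have ha : a ∈ w := (h (List.replicate (k+1) a) (by simp)).subset (by simp)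
      have hb : b ∈ w := (h (List.replicate (k+1) b) (by simp)).subset (by simp)
      have hw : w ≠ [] := by rintro rfl; simp at ha
      obtain ⟨y, hyc, hy, hpair⟩ :
          ∃ y, y ≠ w.head hw ∧ y ∈ w ∧
            ((w.head hw = a ∧ y = b) ∨ (w.head hw = b ∧ y = a)) := by
        rcases bool_cases (c := w.head hw) hab with h1 | h1
        · exact ⟨b, by rw [h1]; exact (Ne.symm hab), hb, Or.inl ⟨h1, rfl⟩⟩
        · exact ⟨a, by rw [h1]; exact hab, ha, Or.inr ⟨h1, rfl⟩⟩
      obtain ⟨s, t, hst, hys⟩ := first_occ w y hy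
      have hs : s ≠ [] := by
        rintro rfl
        simp only [List.nil_append] at hst
        exact hyc (by subst hst; rfl)
      obtain ⟨s', x, rfl⟩ := (List.eq_nil_or_concat s).resolve_left hs
      have hxny : x ≠ y := fun h => hys (by simp [h])
      have hxy : (x = a ∧ y = b) ∨ (x = b ∧ y = a) := by
        rcases hpair with ⟨_, rfl⟩ | ⟨_, rfl⟩
        · rcases bool_cases (c := x) hab with rfl | rfl
          · exact Or.inl ⟨rfl, rfl⟩
          · exact absurd rfl hxny
        · rcases bool_cases (c := x) hab with rfl | rfl
          · exact absurd rfl hxny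
          · exact Or.inr ⟨rfl, rfl⟩
      have ht : ∀ u : List Bool, u.length = k → u.Sublist t := by
        intro u hu
        have h1 : (y :: u).Sublist w := h (y :: u) (by simp [hu])
        rw [hst] at h1
        exact skip_prefix _ hys h1
      obtain ⟨s₀, l, hl1, hl2, hl3⟩ := ih t ht
      refine ⟨s', ([x, y], s₀) :: l, by simp [hl1], ?_, ?_⟩
      · intro p hp
        rcases List.mem_cons.mp hp with rfl | hp
        · rcases hxy with ⟨rfl, rfl⟩ | ⟨rfl, rfl⟩
          · exact Or.inl rfl
          · exact Or.inr rfl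
        · exact hl2 p hp
      · rw [hst, hl3]
        simp [List.append_assoc]
  · rintro ⟨s₀, l, rfl, hl, rfl⟩
    intro u hu
    exact (mem_sublist_join hab l hl u hu).trans (List.sublist_append_right _ _)
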